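/- Let F be a 2-form on Minkowski space with (F,F)² + (*F,F)² ≠ 0 (a non-null 2-form). Then there exist a t-volume U and real numbers a, b such that F = a·U + b·(*U). -/

import Mathlib

open Matrix BigOperators

noncomputable section

/-- Minkowski space: ℝ⁴. -/
abbrev V4 : Type := Fin 4 → ℝ

/-- The signature signs of η = diag(−1,1,1,1). -/
def etaSgn (i : Fin 4) : ℝ := if i = 0 then -1 else 1

/-- The Lorentzian bilinear form η(x,y) = −x⁰y⁰ + x¹y¹ + x²y² + x³y³. -/
def etaB (x y : V4) : ℝ := ∑ i, etaSgn i * x i * y i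

/-- Action of a 2-form on a vector: F(x)^α = η^{αμ} F_{μν} x^ν. -/
def act (F : Matrix (Fin 4) (Fin 4) ℝ) (x : V4) : V4 :=
  fun a => etaSgn a * ∑ b, F a b * x b

/-- The product of 2-forms: (F,G) = ½ F_{αβ} G^{αβ}. -/
def formInner (F G : Matrix (Fin 4) (Fin 4) ℝ) : ℝ :=
  (1 / 2) * ∑ a, ∑ b, etaSgn a * etaSgn b * F a b * G a b

/-- The Levi-Civita symbol on four indices, with ε₀₁₂₃ = 1. -/
def eps (a b c d : Fin 4) : ℝ :=
  Matrix.det (Matrix.of fun i j => if ![a, b, c, d] i = j then (1 : ℝ) else 0)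

/-- The Hodge dual: (*F)_{αβ} = ½ ε_{αβμν} F^{μν}. -/
def hodge (F : Matrix (Fin 4) (Fin 4) ℝ) : Matrix (Fin 4) (Fin 4) ℝ :=
  Matrix.of fun a b => (1 / 2) * ∑ m, ∑ n, eps a b m n * (etaSgn m * etaSgn n * F m n)

/-- Exterior product of vectors: (u∧v)_{αβ} = u_α v_β − u_β v_α, with indices lowered by η. -/
def wedge (u v : V4) : Matrix (Fin 4) (Fin 4) ℝ :=
  Matrix.of fun a b => (etaSgn a * u a) * (etaSgn b * v b) - (etaSgn b * u b) * (etaSgn a * v a)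

/-- A null 2-form: a nonzero antisymmetric matrix F with (F,F) = 0 and (*F,F) = 0. -/
def IsNullForm (F : Matrix (Fin 4) (Fin 4) ℝ) : Prop :=
  Fᵀ = -F ∧ F ≠ 0 ∧ formInner F F = 0 ∧ formInner (hodge F) F = 0

/-- A t-volume: an antisymmetric matrix U with (U,U) = −1 and (*U,U) = 0. -/
def IsTVolume (U : Matrix (Fin 4) (Fin 4) ℝ) : Prop :=
  Uᵀ = -U ∧ formInner U U = -1 ∧ formInner (hodge U) U = 0

/- ### Auxiliary lemmas for the Levi-Civita symbol -/

def epsZ (a b c d : Fin 4) : ℤ :=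
  (((b:ℤ)-a)*((c:ℤ)-a)*((d:ℤ)-a)*((c:ℤ)-b)*((d:ℤ)-b)*((d:ℤ)-c))/12

lemma detZ_eq : ∀ a b c d : Fin 4,
    (Matrix.of fun i j => if ![a,b,c,d] i = j then (1:ℤ) else 0).det = epsZ a b c d := by
  decide

lemma eps_cast (a b c d : Fin 4) : eps a b c d = (epsZ a b c d : ℝ) := by
  have h := RingHom.map_det (Int.castRingHom ℝ)
    (Matrix.of fun i j => if ![a,b,c,d] i = j then (1:ℤ) else 0)
  rw [← detZ_eq a b c d, eps]
  show _ = (Int.castRingHom ℝ) _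
  rw [h]
  congr 1
  ext i j
  simp [RingHom.mapMatrix_apply, Matrix.map_apply, apply_ite]

@[simp] lemma etaSgn0 : etaSgn 0 = -1 := rfl
@[simp] lemma etaSgn1 : etaSgn 1 = 1 := rfl
@[simp] lemma etaSgn2 : etaSgn 2 = 1 := rfl
@[simp] lemma etaSgn3 : etaSgn 3 = 1 := rfl

@[simp] lemma epsv_0000 : eps 0 0 0 0 = 0 := by
  rw [eps_cast, show epsZ 0 0 0 0 = 0 from by decide]; norm_num
@[simp] lemma epsv_0001 : eps 0 0 0 1 = 0 := by
  rw [eps_cast, show epsZ 0 0 0 1 = 0 from by decide]; norm_num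
@[simp] lemma epsv_0002 : eps 0 0 0 2 = 0 := by
  rw [eps_cast, show epsZ 0 0 0 2 = 0 from by decide]; norm_num
@[simp] lemma epsv_0003 : eps 0 0 0 3 = 0 := by
  rw [eps_cast, show epsZ 0 0 0 3 = 0 from by decide]; norm_num
@[simp] lemma epsv_0010 : eps 0 0 1 0 = 0 := by
  rw [eps_cast, show epsZ 0 0 1 0 = 0 from by decide]; norm_num
@[simp] lemma epsv_0011 : eps 0 0 1 1 = 0 := by
  rw [eps_cast, show epsZ 0 0 1 1 = 0 from by decide]; norm_num
@[simp] lemma epsv_0012 : eps 0 0 1 2 = 0 := by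
  rw [eps_cast, show epsZ 0 0 1 2 = 0 from by decide]; norm_num
@[simp] lemma epsv_0013 : eps 0 0 1 3 = 0 := by
  rw [eps_cast, show epsZ 0 0 1 3 = 0 from by decide]; norm_num
@[simp] lemma epsv_0020 : eps 0 0 2 0 = 0 := by
  rw [eps_cast, show epsZ 0 0 2 0 = 0 from by decide]; norm_num
@[simp] lemma epsv_0021 : eps 0 0 2 1 = 0 := by
  rw [eps_cast, show epsZ 0 0 2 1 = 0 from by decide]; norm_num
@[simp] lemma epsv_0022 : eps 0 0 2 2 = 0 := by
  rw [eps_cast, show epsZ 0 0 2 2 = 0 from by decide]; norm_num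
@[simp] lemma epsv_0023 : eps 0 0 2 3 = 0 := by
  rw [eps_cast, show epsZ 0 0 2 3 = 0 from by decide]; norm_num
@[simp] lemma epsv_0030 : eps 0 0 3 0 = 0 := by
  rw [eps_cast, show epsZ 0 0 3 0 = 0 from by decide]; norm_num
@[simp] lemma epsv_0031 : eps 0 0 3 1 = 0 := by
  rw [eps_cast, show epsZ 0 0 3 1 = 0 from by decide]; norm_num
@[simp] lemma epsv_0032 : eps 0 0 3 2 = 0 := by
  rw [eps_cast, show epsZ 0 0 3 2 = 0 from by decide]; norm_num
@[simp] lemma epsv_0033 : eps 0 0 3 3 = 0 := by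
  rw [eps_cast, show epsZ 0 0 3 3 = 0 from by decide]; norm_num
@[simp] lemma epsv_0100 : eps 0 1 0 0 = 0 := by
  rw [eps_cast, show epsZ 0 1 0 0 = 0 from by decide]; norm_num
@[simp] lemma epsv_0101 : eps 0 1 0 1 = 0 := by
  rw [eps_cast, show epsZ 0 1 0 1 = 0 from by decide]; norm_num
@[simp] lemma epsv_0102 : eps 0 1 0 2 = 0 := by
  rw [eps_cast, show epsZ 0 1 0 2 = 0 from by decide]; norm_num
@[simp] lemma epsv_0103 : eps 0 1 0 3 = 0 := by
  rw [eps_cast, show epsZ 0 1 0 3 = 0 from by decide]; norm_num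
@[simp] lemma epsv_0110 : eps 0 1 1 0 = 0 := by
  rw [eps_cast, show epsZ 0 1 1 0 = 0 from by decide]; norm_num
@[simp] lemma epsv_0111 : eps 0 1 1 1 = 0 := by
  rw [eps_cast, show epsZ 0 1 1 1 = 0 from by decide]; norm_num
@[simp] lemma epsv_0112 : eps 0 1 1 2 = 0 := by
  rw [eps_cast, show epsZ 0 1 1 2 = 0 from by decide]; norm_num
@[simp] lemma epsv_0113 : eps 0 1 1 3 = 0 := by
  rw [eps_cast, show epsZ 0 1 1 3 = 0 from by decide]; norm_num
@[simp] lemma epsv_0120 : eps 0 1 2 0 = 0 := by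
  rw [eps_cast, show epsZ 0 1 2 0 = 0 from by decide]; norm_num
@[simp] lemma epsv_0121 : eps 0 1 2 1 = 0 := by
  rw [eps_cast, show epsZ 0 1 2 1 = 0 from by decide]; norm_num
@[simp] lemma epsv_0122 : eps 0 1 2 2 = 0 := by
  rw [eps_cast, show epsZ 0 1 2 2 = 0 from by decide]; norm_num
@[simp] lemma epsv_0123 : eps 0 1 2 3 = 1 := by
  rw [eps_cast, show epsZ 0 1 2 3 = 1 from by decide]; norm_num
@[simp] lemma epsv_0130 : eps 0 1 3 0 = 0 := by
  rw [eps_cast, show epsZ 0 1 3 0 = 0 from by decide]; norm_num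
@[simp] lemma epsv_0131 : eps 0 1 3 1 = 0 := by
  rw [eps_cast, show epsZ 0 1 3 1 = 0 from by decide]; norm_num
@[simp] lemma epsv_0132 : eps 0 1 3 2 = -1 := by
  rw [eps_cast, show epsZ 0 1 3 2 = -1 from by decide]; norm_num
@[simp] lemma epsv_0133 : eps 0 1 3 3 = 0 := by
  rw [eps_cast, show epsZ 0 1 3 3 = 0 from by decide]; norm_num
@[simp] lemma epsv_0200 : eps 0 2 0 0 = 0 := by
  rw [eps_cast, show epsZ 0 2 0 0 = 0 from by decide]; norm_num
@[simp] lemma epsv_0201 : eps 0 2 0 1 = 0 := by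
  rw [eps_cast, show epsZ 0 2 0 1 = 0 from by decide]; norm_num
@[simp] lemma epsv_0202 : eps 0 2 0 2 = 0 := by
  rw [eps_cast, show epsZ 0 2 0 2 = 0 from by decide]; norm_num
@[simp] lemma epsv_0203 : eps 0 2 0 3 = 0 := by
  rw [eps_cast, show epsZ 0 2 0 3 = 0 from by decide]; norm_num
@[simp] lemma epsv_0210 : eps 0 2 1 0 = 0 := by
  rw [eps_cast, show epsZ 0 2 1 0 = 0 from by decide]; norm_num
@[simp] lemma epsv_0211 : eps 0 2 1 1 = 0 := by
  rw [eps_cast, show epsZ 0 2 1 1 = 0 from by decide]; norm_num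
@[simp] lemma epsv_0212 : eps 0 2 1 2 = 0 := by
  rw [eps_cast, show epsZ 0 2 1 2 = 0 from by decide]; norm_num
@[simp] lemma epsv_0213 : eps 0 2 1 3 = -1 := by
  rw [eps_cast, show epsZ 0 2 1 3 = -1 from by decide]; norm_num
@[simp] lemma epsv_0220 : eps 0 2 2 0 = 0 := by
  rw [eps_cast, show epsZ 0 2 2 0 = 0 from by decide]; norm_num
@[simp] lemma epsv_0221 : eps 0 2 2 1 = 0 := by
  rw [eps_cast, show epsZ 0 2 2 1 = 0 from by decide]; norm_num
@[simp] lemma epsv_0222 : eps 0 2 2 2 = 0 := by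
  rw [eps_cast, show epsZ 0 2 2 2 = 0 from by decide]; norm_num
@[simp] lemma epsv_0223 : eps 0 2 2 3 = 0 := by
  rw [eps_cast, show epsZ 0 2 2 3 = 0 from by decide]; norm_num
@[simp] lemma epsv_0230 : eps 0 2 3 0 = 0 := by
  rw [eps_cast, show epsZ 0 2 3 0 = 0 from by decide]; norm_num
@[simp] lemma epsv_0231 : eps 0 2 3 1 = 1 := by
  rw [eps_cast, show epsZ 0 2 3 1 = 1 from by decide]; norm_num
@[simp] lemma epsv_0232 : eps 0 2 3 2 = 0 := by
  rw [eps_cast, show epsZ 0 2 3 2 = 0 from by decide]; norm_num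
@[simp] lemma epsv_0233 : eps 0 2 3 3 = 0 := by
  rw [eps_cast, show epsZ 0 2 3 3 = 0 from by decide]; norm_num
@[simp] lemma epsv_0300 : eps 0 3 0 0 = 0 := by
  rw [eps_cast, show epsZ 0 3 0 0 = 0 from by decide]; norm_num
@[simp] lemma epsv_0301 : eps 0 3 0 1 = 0 := by
  rw [eps_cast, show epsZ 0 3 0 1 = 0 from by decide]; norm_num
@[simp] lemma epsv_0302 : eps 0 3 0 2 = 0 := by
  rw [eps_cast, show epsZ 0 3 0 2 = 0 from by decide]; norm_num
@[simp] lemma epsv_0303 : eps 0 3 0 3 = 0 := by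
  rw [eps_cast, show epsZ 0 3 0 3 = 0 from by decide]; norm_num
@[simp] lemma epsv_0310 : eps 0 3 1 0 = 0 := by
  rw [eps_cast, show epsZ 0 3 1 0 = 0 from by decide]; norm_num
@[simp] lemma epsv_0311 : eps 0 3 1 1 = 0 := by
  rw [eps_cast, show epsZ 0 3 1 1 = 0 from by decide]; norm_num
@[simp] lemma epsv_0312 : eps 0 3 1 2 = 1 := by
  rw [eps_cast, show epsZ 0 3 1 2 = 1 from by decide]; norm_num
@[simp] lemma epsv_0313 : eps 0 3 1 3 = 0 := by
  rw [eps_cast, show epsZ 0 3 1 3 = 0 from by decide]; norm_num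
@[simp] lemma epsv_0320 : eps 0 3 2 0 = 0 := by
  rw [eps_cast, show epsZ 0 3 2 0 = 0 from by decide]; norm_num
@[simp] lemma epsv_0321 : eps 0 3 2 1 = -1 := by
  rw [eps_cast, show epsZ 0 3 2 1 = -1 from by decide]; norm_num
@[simp] lemma epsv_0322 : eps 0 3 2 2 = 0 := by
  rw [eps_cast, show epsZ 0 3 2 2 = 0 from by decide]; norm_num
@[simp] lemma epsv_0323 : eps 0 3 2 3 = 0 := by
  rw [eps_cast, show epsZ 0 3 2 3 = 0 from by decide]; norm_num
@[simp] lemma epsv_0330 : eps 0 3 3 0 = 0 := by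
  rw [eps_cast, show epsZ 0 3 3 0 = 0 from by decide]; norm_num
@[simp] lemma epsv_0331 : eps 0 3 3 1 = 0 := by
  rw [eps_cast, show epsZ 0 3 3 1 = 0 from by decide]; norm_num
@[simp] lemma epsv_0332 : eps 0 3 3 2 = 0 := by
  rw [eps_cast, show epsZ 0 3 3 2 = 0 from by decide]; norm_num
@[simp] lemma epsv_0333 : eps 0 3 3 3 = 0 := by
  rw [eps_cast, show epsZ 0 3 3 3 = 0 from by decide]; norm_num
@[simp] lemma epsv_1000 : eps 1 0 0 0 = 0 := by
  rw [eps_cast, show epsZ 1 0 0 0 = 0 from by decide]; norm_num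
@[simp] lemma epsv_1001 : eps 1 0 0 1 = 0 := by
  rw [eps_cast, show epsZ 1 0 0 1 = 0 from by decide]; norm_num
@[simp] lemma epsv_1002 : eps 1 0 0 2 = 0 := by
  rw [eps_cast, show epsZ 1 0 0 2 = 0 from by decide]; norm_num
@[simp] lemma epsv_1003 : eps 1 0 0 3 = 0 := by
  rw [eps_cast, show epsZ 1 0 0 3 = 0 from by decide]; norm_num
@[simp] lemma epsv_1010 : eps 1 0 1 0 = 0 := by
  rw [eps_cast, show epsZ 1 0 1 0 = 0 from by decide]; norm_num
@[simp] lemma epsv_1011 : eps 1 0 1 1 = 0 := by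
  rw [eps_cast, show epsZ 1 0 1 1 = 0 from by decide]; norm_num
@[simp] lemma epsv_1012 : eps 1 0 1 2 = 0 := by
  rw [eps_cast, show epsZ 1 0 1 2 = 0 from by decide]; norm_num
@[simp] lemma epsv_1013 : eps 1 0 1 3 = 0 := by
  rw [eps_cast, show epsZ 1 0 1 3 = 0 from by decide]; norm_num
@[simp] lemma epsv_1020 : eps 1 0 2 0 = 0 := by
  rw [eps_cast, show epsZ 1 0 2 0 = 0 from by decide]; norm_num
@[simp] lemma epsv_1021 : eps 1 0 2 1 = 0 := by
  rw [eps_cast, show epsZ 1 0 2 1 = 0 from by decide]; norm_num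
@[simp] lemma epsv_1022 : eps 1 0 2 2 = 0 := by
  rw [eps_cast, show epsZ 1 0 2 2 = 0 from by decide]; norm_num
@[simp] lemma epsv_1023 : eps 1 0 2 3 = -1 := by
  rw [eps_cast, show epsZ 1 0 2 3 = -1 from by decide]; norm_num
@[simp] lemma epsv_1030 : eps 1 0 3 0 = 0 := by
  rw [eps_cast, show epsZ 1 0 3 0 = 0 from by decide]; norm_num
@[simp] lemma epsv_1031 : eps 1 0 3 1 = 0 := by
  rw [eps_cast, show epsZ 1 0 3 1 = 0 from by decide]; norm_num
@[simp] lemma epsv_1032 : eps 1 0 3 2 = 1 := by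
  rw [eps_cast, show epsZ 1 0 3 2 = 1 from by decide]; norm_num
@[simp] lemma epsv_1033 : eps 1 0 3 3 = 0 := by
  rw [eps_cast, show epsZ 1 0 3 3 = 0 from by decide]; norm_num
@[simp] lemma epsv_1100 : eps 1 1 0 0 = 0 := by
  rw [eps_cast, show epsZ 1 1 0 0 = 0 from by decide]; norm_num
@[simp] lemma epsv_1101 : eps 1 1 0 1 = 0 := by
  rw [eps_cast, show epsZ 1 1 0 1 = 0 from by decide]; norm_num
@[simp] lemma epsv_1102 : eps 1 1 0 2 = 0 := by
  rw [eps_cast, show epsZ 1 1 0 2 = 0 from by decide]; norm_num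
@[simp] lemma epsv_1103 : eps 1 1 0 3 = 0 := by
  rw [eps_cast, show epsZ 1 1 0 3 = 0 from by decide]; norm_num
@[simp] lemma epsv_1110 : eps 1 1 1 0 = 0 := by
  rw [eps_cast, show epsZ 1 1 1 0 = 0 from by decide]; norm_num
@[simp] lemma epsv_1111 : eps 1 1 1 1 = 0 := by
  rw [eps_cast, show epsZ 1 1 1 1 = 0 from by decide]; norm_num
@[simp] lemma epsv_1112 : eps 1 1 1 2 = 0 := by
  rw [eps_cast, show epsZ 1 1 1 2 = 0 from by decide]; norm_num
@[simp] lemma epsv_1113 : eps 1 1 1 3 = 0 := by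
  rw [eps_cast, show epsZ 1 1 1 3 = 0 from by decide]; norm_num
@[simp] lemma epsv_1120 : eps 1 1 2 0 = 0 := by
  rw [eps_cast, show epsZ 1 1 2 0 = 0 from by decide]; norm_num
@[simp] lemma epsv_1121 : eps 1 1 2 1 = 0 := by
  rw [eps_cast, show epsZ 1 1 2 1 = 0 from by decide]; norm_num
@[simp] lemma epsv_1122 : eps 1 1 2 2 = 0 := by
  rw [eps_cast, show epsZ 1 1 2 2 = 0 from by decide]; norm_num
@[simp] lemma epsv_1123 : eps 1 1 2 3 = 0 := by
  rw [eps_cast, show epsZ 1 1 2 3 = 0 from by decide]; norm_num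
@[simp] lemma epsv_1130 : eps 1 1 3 0 = 0 := by
  rw [eps_cast, show epsZ 1 1 3 0 = 0 from by decide]; norm_num
@[simp] lemma epsv_1131 : eps 1 1 3 1 = 0 := by
  rw [eps_cast, show epsZ 1 1 3 1 = 0 from by decide]; norm_num
@[simp] lemma epsv_1132 : eps 1 1 3 2 = 0 := by
  rw [eps_cast, show epsZ 1 1 3 2 = 0 from by decide]; norm_num
@[simp] lemma epsv_1133 : eps 1 1 3 3 = 0 := by
  rw [eps_cast, show epsZ 1 1 3 3 = 0 from by decide]; norm_num
@[simp] lemma epsv_1200 : eps 1 2 0 0 = 0 := by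
  rw [eps_cast, show epsZ 1 2 0 0 = 0 from by decide]; norm_num
@[simp] lemma epsv_1201 : eps 1 2 0 1 = 0 := by
  rw [eps_cast, show epsZ 1 2 0 1 = 0 from by decide]; norm_num
@[simp] lemma epsv_1202 : eps 1 2 0 2 = 0 := by
  rw [eps_cast, show epsZ 1 2 0 2 = 0 from by decide]; norm_num
@[simp] lemma epsv_1203 : eps 1 2 0 3 = 1 := by
  rw [eps_cast, show epsZ 1 2 0 3 = 1 from by decide]; norm_num
@[simp] lemma epsv_1210 : eps 1 2 1 0 = 0 := by
  rw [eps_cast, show epsZ 1 2 1 0 = 0 from by decide]; norm_num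
@[simp] lemma epsv_1211 : eps 1 2 1 1 = 0 := by
  rw [eps_cast, show epsZ 1 2 1 1 = 0 from by decide]; norm_num
@[simp] lemma epsv_1212 : eps 1 2 1 2 = 0 := by
  rw [eps_cast, show epsZ 1 2 1 2 = 0 from by decide]; norm_num
@[simp] lemma epsv_1213 : eps 1 2 1 3 = 0 := by
  rw [eps_cast, show epsZ 1 2 1 3 = 0 from by decide]; norm_num
@[simp] lemma epsv_1220 : eps 1 2 2 0 = 0 := by
  rw [eps_cast, show epsZ 1 2 2 0 = 0 from by decide]; norm_num
@[simp] lemma epsv_1221 : eps 1 2 2 1 = 0 := by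
  rw [eps_cast, show epsZ 1 2 2 1 = 0 from by decide]; norm_num
@[simp] lemma epsv_1222 : eps 1 2 2 2 = 0 := by
  rw [eps_cast, show epsZ 1 2 2 2 = 0 from by decide]; norm_num
@[simp] lemma epsv_1223 : eps 1 2 2 3 = 0 := by
  rw [eps_cast, show epsZ 1 2 2 3 = 0 from by decide]; norm_num
@[simp] lemma epsv_1230 : eps 1 2 3 0 = -1 := by
  rw [eps_cast, show epsZ 1 2 3 0 = -1 from by decide]; norm_num
@[simp] lemma epsv_1231 : eps 1 2 3 1 = 0 := by
  rw [eps_cast, show epsZ 1 2 3 1 = 0 from by decide]; norm_num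
@[simp] lemma epsv_1232 : eps 1 2 3 2 = 0 := by
  rw [eps_cast, show epsZ 1 2 3 2 = 0 from by decide]; norm_num
@[simp] lemma epsv_1233 : eps 1 2 3 3 = 0 := by
  rw [eps_cast, show epsZ 1 2 3 3 = 0 from by decide]; norm_num
@[simp] lemma epsv_1300 : eps 1 3 0 0 = 0 := by
  rw [eps_cast, show epsZ 1 3 0 0 = 0 from by decide]; norm_num
@[simp] lemma epsv_1301 : eps 1 3 0 1 = 0 := by
  rw [eps_cast, show epsZ 1 3 0 1 = 0 from by decide]; norm_num
@[simp] lemma epsv_1302 : eps 1 3 0 2 = -1 := by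
  rw [eps_cast, show epsZ 1 3 0 2 = -1 from by decide]; norm_num
@[simp] lemma epsv_1303 : eps 1 3 0 3 = 0 := by
  rw [eps_cast, show epsZ 1 3 0 3 = 0 from by decide]; norm_num
@[simp] lemma epsv_1310 : eps 1 3 1 0 = 0 := by
  rw [eps_cast, show epsZ 1 3 1 0 = 0 from by decide]; norm_num
@[simp] lemma epsv_1311 : eps 1 3 1 1 = 0 := by
  rw [eps_cast, show epsZ 1 3 1 1 = 0 from by decide]; norm_num
@[simp] lemma epsv_1312 : eps 1 3 1 2 = 0 := by
  rw [eps_cast, show epsZ 1 3 1 2 = 0 from by decide]; norm_num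
@[simp] lemma epsv_1313 : eps 1 3 1 3 = 0 := by
  rw [eps_cast, show epsZ 1 3 1 3 = 0 from by decide]; norm_num
@[simp] lemma epsv_1320 : eps 1 3 2 0 = 1 := by
  rw [eps_cast, show epsZ 1 3 2 0 = 1 from by decide]; norm_num
@[simp] lemma epsv_1321 : eps 1 3 2 1 = 0 := by
  rw [eps_cast, show epsZ 1 3 2 1 = 0 from by decide]; norm_num
@[simp] lemma epsv_1322 : eps 1 3 2 2 = 0 := by
  rw [eps_cast, show epsZ 1 3 2 2 = 0 from by decide]; norm_num
@[simp] lemma epsv_1323 : eps 1 3 2 3 = 0 := by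
  rw [eps_cast, show epsZ 1 3 2 3 = 0 from by decide]; norm_num
@[simp] lemma epsv_1330 : eps 1 3 3 0 = 0 := by
  rw [eps_cast, show epsZ 1 3 3 0 = 0 from by decide]; norm_num
@[simp] lemma epsv_1331 : eps 1 3 3 1 = 0 := by
  rw [eps_cast, show epsZ 1 3 3 1 = 0 from by decide]; norm_num
@[simp] lemma epsv_1332 : eps 1 3 3 2 = 0 := by
  rw [eps_cast, show epsZ 1 3 3 2 = 0 from by decide]; norm_num
@[simp] lemma epsv_1333 : eps 1 3 3 3 = 0 := by
  rw [eps_cast, show epsZ 1 3 3 3 = 0 from by decide]; norm_num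
@[simp] lemma epsv_2000 : eps 2 0 0 0 = 0 := by
  rw [eps_cast, show epsZ 2 0 0 0 = 0 from by decide]; norm_num
@[simp] lemma epsv_2001 : eps 2 0 0 1 = 0 := by
  rw [eps_cast, show epsZ 2 0 0 1 = 0 from by decide]; norm_num
@[simp] lemma epsv_2002 : eps 2 0 0 2 = 0 := by
  rw [eps_cast, show epsZ 2 0 0 2 = 0 from by decide]; norm_num
@[simp] lemma epsv_2003 : eps 2 0 0 3 = 0 := by
  rw [eps_cast, show epsZ 2 0 0 3 = 0 from by decide]; norm_num
@[simp] lemma epsv_2010 : eps 2 0 1 0 = 0 := by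
  rw [eps_cast, show epsZ 2 0 1 0 = 0 from by decide]; norm_num
@[simp] lemma epsv_2011 : eps 2 0 1 1 = 0 := by
  rw [eps_cast, show epsZ 2 0 1 1 = 0 from by decide]; norm_num
@[simp] lemma epsv_2012 : eps 2 0 1 2 = 0 := by
  rw [eps_cast, show epsZ 2 0 1 2 = 0 from by decide]; norm_num
@[simp] lemma epsv_2013 : eps 2 0 1 3 = 1 := by
  rw [eps_cast, show epsZ 2 0 1 3 = 1 from by decide]; norm_num
@[simp] lemma epsv_2020 : eps 2 0 2 0 = 0 := by
  rw [eps_cast, show epsZ 2 0 2 0 = 0 from by decide]; norm_num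
@[simp] lemma epsv_2021 : eps 2 0 2 1 = 0 := by
  rw [eps_cast, show epsZ 2 0 2 1 = 0 from by decide]; norm_num
@[simp] lemma epsv_2022 : eps 2 0 2 2 = 0 := by
  rw [eps_cast, show epsZ 2 0 2 2 = 0 from by decide]; norm_num
@[simp] lemma epsv_2023 : eps 2 0 2 3 = 0 := by
  rw [eps_cast, show epsZ 2 0 2 3 = 0 from by decide]; norm_num
@[simp] lemma epsv_2030 : eps 2 0 3 0 = 0 := by
  rw [eps_cast, show epsZ 2 0 3 0 = 0 from by decide]; norm_num
@[simp] lemma epsv_2031 : eps 2 0 3 1 = -1 := by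
  rw [eps_cast, show epsZ 2 0 3 1 = -1 from by decide]; norm_num
@[simp] lemma epsv_2032 : eps 2 0 3 2 = 0 := by
  rw [eps_cast, show epsZ 2 0 3 2 = 0 from by decide]; norm_num
@[simp] lemma epsv_2033 : eps 2 0 3 3 = 0 := by
  rw [eps_cast, show epsZ 2 0 3 3 = 0 from by decide]; norm_num
@[simp] lemma epsv_2100 : eps 2 1 0 0 = 0 := by
  rw [eps_cast, show epsZ 2 1 0 0 = 0 from by decide]; norm_num
@[simp] lemma epsv_2101 : eps 2 1 0 1 = 0 := by
  rw [eps_cast, show epsZ 2 1 0 1 = 0 from by decide]; norm_num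
@[simp] lemma epsv_2102 : eps 2 1 0 2 = 0 := by
  rw [eps_cast, show epsZ 2 1 0 2 = 0 from by decide]; norm_num
@[simp] lemma epsv_2103 : eps 2 1 0 3 = -1 := by
  rw [eps_cast, show epsZ 2 1 0 3 = -1 from by decide]; norm_num
@[simp] lemma epsv_2110 : eps 2 1 1 0 = 0 := by
  rw [eps_cast, show epsZ 2 1 1 0 = 0 from by decide]; norm_num
@[simp] lemma epsv_2111 : eps 2 1 1 1 = 0 := by
  rw [eps_cast, show epsZ 2 1 1 1 = 0 from by decide]; norm_num
@[simp] lemma epsv_2112 : eps 2 1 1 2 = 0 := by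
  rw [eps_cast, show epsZ 2 1 1 2 = 0 from by decide]; norm_num
@[simp] lemma epsv_2113 : eps 2 1 1 3 = 0 := by
  rw [eps_cast, show epsZ 2 1 1 3 = 0 from by decide]; norm_num
@[simp] lemma epsv_2120 : eps 2 1 2 0 = 0 := by
  rw [eps_cast, show epsZ 2 1 2 0 = 0 from by decide]; norm_num
@[simp] lemma epsv_2121 : eps 2 1 2 1 = 0 := by
  rw [eps_cast, show epsZ 2 1 2 1 = 0 from by decide]; norm_num
@[simp] lemma epsv_2122 : eps 2 1 2 2 = 0 := by
  rw [eps_cast, show epsZ 2 1 2 2 = 0 from by decide]; norm_num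
@[simp] lemma epsv_2123 : eps 2 1 2 3 = 0 := by
  rw [eps_cast, show epsZ 2 1 2 3 = 0 from by decide]; norm_num
@[simp] lemma epsv_2130 : eps 2 1 3 0 = 1 := by
  rw [eps_cast, show epsZ 2 1 3 0 = 1 from by decide]; norm_num
@[simp] lemma epsv_2131 : eps 2 1 3 1 = 0 := by
  rw [eps_cast, show epsZ 2 1 3 1 = 0 from by decide]; norm_num
@[simp] lemma epsv_2132 : eps 2 1 3 2 = 0 := by
  rw [eps_cast, show epsZ 2 1 3 2 = 0 from by decide]; norm_num
@[simp] lemma epsv_2133 : eps 2 1 3 3 = 0 := by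
  rw [eps_cast, show epsZ 2 1 3 3 = 0 from by decide]; norm_num
@[simp] lemma epsv_2200 : eps 2 2 0 0 = 0 := by
  rw [eps_cast, show epsZ 2 2 0 0 = 0 from by decide]; norm_num
@[simp] lemma epsv_2201 : eps 2 2 0 1 = 0 := by
  rw [eps_cast, show epsZ 2 2 0 1 = 0 from by decide]; norm_num
@[simp] lemma epsv_2202 : eps 2 2 0 2 = 0 := by
  rw [eps_cast, show epsZ 2 2 0 2 = 0 from by decide]; norm_num
@[simp] lemma epsv_2203 : eps 2 2 0 3 = 0 := by
  rw [eps_cast, show epsZ 2 2 0 3 = 0 from by decide]; norm_num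
@[simp] lemma epsv_2210 : eps 2 2 1 0 = 0 := by
  rw [eps_cast, show epsZ 2 2 1 0 = 0 from by decide]; norm_num
@[simp] lemma epsv_2211 : eps 2 2 1 1 = 0 := by
  rw [eps_cast, show epsZ 2 2 1 1 = 0 from by decide]; norm_num
@[simp] lemma epsv_2212 : eps 2 2 1 2 = 0 := by
  rw [eps_cast, show epsZ 2 2 1 2 = 0 from by decide]; norm_num
@[simp] lemma epsv_2213 : eps 2 2 1 3 = 0 := by
  rw [eps_cast, show epsZ 2 2 1 3 = 0 from by decide]; norm_num
@[simp] lemma epsv_2220 : eps 2 2 2 0 = 0 := by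
  rw [eps_cast, show epsZ 2 2 2 0 = 0 from by decide]; norm_num
@[simp] lemma epsv_2221 : eps 2 2 2 1 = 0 := by
  rw [eps_cast, show epsZ 2 2 2 1 = 0 from by decide]; norm_num
@[simp] lemma epsv_2222 : eps 2 2 2 2 = 0 := by
  rw [eps_cast, show epsZ 2 2 2 2 = 0 from by decide]; norm_num
@[simp] lemma epsv_2223 : eps 2 2 2 3 = 0 := by
  rw [eps_cast, show epsZ 2 2 2 3 = 0 from by decide]; norm_num
@[simp] lemma epsv_2230 : eps 2 2 3 0 = 0 := by
  rw [eps_cast, show epsZ 2 2 3 0 = 0 from by decide]; norm_num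
@[simp] lemma epsv_2231 : eps 2 2 3 1 = 0 := by
  rw [eps_cast, show epsZ 2 2 3 1 = 0 from by decide]; norm_num
@[simp] lemma epsv_2232 : eps 2 2 3 2 = 0 := by
  rw [eps_cast, show epsZ 2 2 3 2 = 0 from by decide]; norm_num
@[simp] lemma epsv_2233 : eps 2 2 3 3 = 0 := by
  rw [eps_cast, show epsZ 2 2 3 3 = 0 from by decide]; norm_num
@[simp] lemma epsv_2300 : eps 2 3 0 0 = 0 := by
  rw [eps_cast, show epsZ 2 3 0 0 = 0 from by decide]; norm_num
@[simp] lemma epsv_2301 : eps 2 3 0 1 = 1 := by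
  rw [eps_cast, show epsZ 2 3 0 1 = 1 from by decide]; norm_num
@[simp] lemma epsv_2302 : eps 2 3 0 2 = 0 := by
  rw [eps_cast, show epsZ 2 3 0 2 = 0 from by decide]; norm_num
@[simp] lemma epsv_2303 : eps 2 3 0 3 = 0 := by
  rw [eps_cast, show epsZ 2 3 0 3 = 0 from by decide]; norm_num
@[simp] lemma epsv_2310 : eps 2 3 1 0 = -1 := by
  rw [eps_cast, show epsZ 2 3 1 0 = -1 from by decide]; norm_num
@[simp] lemma epsv_2311 : eps 2 3 1 1 = 0 := by
  rw [eps_cast, show epsZ 2 3 1 1 = 0 from by decide]; norm_num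
@[simp] lemma epsv_2312 : eps 2 3 1 2 = 0 := by
  rw [eps_cast, show epsZ 2 3 1 2 = 0 from by decide]; norm_num
@[simp] lemma epsv_2313 : eps 2 3 1 3 = 0 := by
  rw [eps_cast, show epsZ 2 3 1 3 = 0 from by decide]; norm_num
@[simp] lemma epsv_2320 : eps 2 3 2 0 = 0 := by
  rw [eps_cast, show epsZ 2 3 2 0 = 0 from by decide]; norm_num
@[simp] lemma epsv_2321 : eps 2 3 2 1 = 0 := by
  rw [eps_cast, show epsZ 2 3 2 1 = 0 from by decide]; norm_num
@[simp] lemma epsv_2322 : eps 2 3 2 2 = 0 := by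
  rw [eps_cast, show epsZ 2 3 2 2 = 0 from by decide]; norm_num
@[simp] lemma epsv_2323 : eps 2 3 2 3 = 0 := by
  rw [eps_cast, show epsZ 2 3 2 3 = 0 from by decide]; norm_num
@[simp] lemma epsv_2330 : eps 2 3 3 0 = 0 := by
  rw [eps_cast, show epsZ 2 3 3 0 = 0 from by decide]; norm_num
@[simp] lemma epsv_2331 : eps 2 3 3 1 = 0 := by
  rw [eps_cast, show epsZ 2 3 3 1 = 0 from by decide]; norm_num
@[simp] lemma epsv_2332 : eps 2 3 3 2 = 0 := by
  rw [eps_cast, show epsZ 2 3 3 2 = 0 from by decide]; norm_num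
@[simp] lemma epsv_2333 : eps 2 3 3 3 = 0 := by
  rw [eps_cast, show epsZ 2 3 3 3 = 0 from by decide]; norm_num
@[simp] lemma epsv_3000 : eps 3 0 0 0 = 0 := by
  rw [eps_cast, show epsZ 3 0 0 0 = 0 from by decide]; norm_num
@[simp] lemma epsv_3001 : eps 3 0 0 1 = 0 := by
  rw [eps_cast, show epsZ 3 0 0 1 = 0 from by decide]; norm_num
@[simp] lemma epsv_3002 : eps 3 0 0 2 = 0 := by
  rw [eps_cast, show epsZ 3 0 0 2 = 0 from by decide]; norm_num
@[simp] lemma epsv_3003 : eps 3 0 0 3 = 0 := by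
  rw [eps_cast, show epsZ 3 0 0 3 = 0 from by decide]; norm_num
@[simp] lemma epsv_3010 : eps 3 0 1 0 = 0 := by
  rw [eps_cast, show epsZ 3 0 1 0 = 0 from by decide]; norm_num
@[simp] lemma epsv_3011 : eps 3 0 1 1 = 0 := by
  rw [eps_cast, show epsZ 3 0 1 1 = 0 from by decide]; norm_num
@[simp] lemma epsv_3012 : eps 3 0 1 2 = -1 := by
  rw [eps_cast, show epsZ 3 0 1 2 = -1 from by decide]; norm_num
@[simp] lemma epsv_3013 : eps 3 0 1 3 = 0 := by
  rw [eps_cast, show epsZ 3 0 1 3 = 0 from by decide]; norm_num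
@[simp] lemma epsv_3020 : eps 3 0 2 0 = 0 := by
  rw [eps_cast, show epsZ 3 0 2 0 = 0 from by decide]; norm_num
@[simp] lemma epsv_3021 : eps 3 0 2 1 = 1 := by
  rw [eps_cast, show epsZ 3 0 2 1 = 1 from by decide]; norm_num
@[simp] lemma epsv_3022 : eps 3 0 2 2 = 0 := by
  rw [eps_cast, show epsZ 3 0 2 2 = 0 from by decide]; norm_num
@[simp] lemma epsv_3023 : eps 3 0 2 3 = 0 := by
  rw [eps_cast, show epsZ 3 0 2 3 = 0 from by decide]; norm_num
@[simp] lemma epsv_3030 : eps 3 0 3 0 = 0 := by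
  rw [eps_cast, show epsZ 3 0 3 0 = 0 from by decide]; norm_num
@[simp] lemma epsv_3031 : eps 3 0 3 1 = 0 := by
  rw [eps_cast, show epsZ 3 0 3 1 = 0 from by decide]; norm_num
@[simp] lemma epsv_3032 : eps 3 0 3 2 = 0 := by
  rw [eps_cast, show epsZ 3 0 3 2 = 0 from by decide]; norm_num
@[simp] lemma epsv_3033 : eps 3 0 3 3 = 0 := by
  rw [eps_cast, show epsZ 3 0 3 3 = 0 from by decide]; norm_num
@[simp] lemma epsv_3100 : eps 3 1 0 0 = 0 := by
  rw [eps_cast, show epsZ 3 1 0 0 = 0 from by decide]; norm_num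
@[simp] lemma epsv_3101 : eps 3 1 0 1 = 0 := by
  rw [eps_cast, show epsZ 3 1 0 1 = 0 from by decide]; norm_num
@[simp] lemma epsv_3102 : eps 3 1 0 2 = 1 := by
  rw [eps_cast, show epsZ 3 1 0 2 = 1 from by decide]; norm_num
@[simp] lemma epsv_3103 : eps 3 1 0 3 = 0 := by
  rw [eps_cast, show epsZ 3 1 0 3 = 0 from by decide]; norm_num
@[simp] lemma epsv_3110 : eps 3 1 1 0 = 0 := by
  rw [eps_cast, show epsZ 3 1 1 0 = 0 from by decide]; norm_num
@[simp] lemma epsv_3111 : eps 3 1 1 1 = 0 := by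
  rw [eps_cast, show epsZ 3 1 1 1 = 0 from by decide]; norm_num
@[simp] lemma epsv_3112 : eps 3 1 1 2 = 0 := by
  rw [eps_cast, show epsZ 3 1 1 2 = 0 from by decide]; norm_num
@[simp] lemma epsv_3113 : eps 3 1 1 3 = 0 := by
  rw [eps_cast, show epsZ 3 1 1 3 = 0 from by decide]; norm_num
@[simp] lemma epsv_3120 : eps 3 1 2 0 = -1 := by
  rw [eps_cast, show epsZ 3 1 2 0 = -1 from by decide]; norm_num
@[simp] lemma epsv_3121 : eps 3 1 2 1 = 0 := by
  rw [eps_cast, show epsZ 3 1 2 1 = 0 from by decide]; norm_num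
@[simp] lemma epsv_3122 : eps 3 1 2 2 = 0 := by
  rw [eps_cast, show epsZ 3 1 2 2 = 0 from by decide]; norm_num
@[simp] lemma epsv_3123 : eps 3 1 2 3 = 0 := by
  rw [eps_cast, show epsZ 3 1 2 3 = 0 from by decide]; norm_num
@[simp] lemma epsv_3130 : eps 3 1 3 0 = 0 := by
  rw [eps_cast, show epsZ 3 1 3 0 = 0 from by decide]; norm_num
@[simp] lemma epsv_3131 : eps 3 1 3 1 = 0 := by
  rw [eps_cast, show epsZ 3 1 3 1 = 0 from by decide]; norm_num
@[simp] lemma epsv_3132 : eps 3 1 3 2 = 0 := by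
  rw [eps_cast, show epsZ 3 1 3 2 = 0 from by decide]; norm_num
@[simp] lemma epsv_3133 : eps 3 1 3 3 = 0 := by
  rw [eps_cast, show epsZ 3 1 3 3 = 0 from by decide]; norm_num
@[simp] lemma epsv_3200 : eps 3 2 0 0 = 0 := by
  rw [eps_cast, show epsZ 3 2 0 0 = 0 from by decide]; norm_num
@[simp] lemma epsv_3201 : eps 3 2 0 1 = -1 := by
  rw [eps_cast, show epsZ 3 2 0 1 = -1 from by decide]; norm_num
@[simp] lemma epsv_3202 : eps 3 2 0 2 = 0 := by
  rw [eps_cast, show epsZ 3 2 0 2 = 0 from by decide]; norm_num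
@[simp] lemma epsv_3203 : eps 3 2 0 3 = 0 := by
  rw [eps_cast, show epsZ 3 2 0 3 = 0 from by decide]; norm_num
@[simp] lemma epsv_3210 : eps 3 2 1 0 = 1 := by
  rw [eps_cast, show epsZ 3 2 1 0 = 1 from by decide]; norm_num
@[simp] lemma epsv_3211 : eps 3 2 1 1 = 0 := by
  rw [eps_cast, show epsZ 3 2 1 1 = 0 from by decide]; norm_num
@[simp] lemma epsv_3212 : eps 3 2 1 2 = 0 := by
  rw [eps_cast, show epsZ 3 2 1 2 = 0 from by decide]; norm_num
@[simp] lemma epsv_3213 : eps 3 2 1 3 = 0 := by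
  rw [eps_cast, show epsZ 3 2 1 3 = 0 from by decide]; norm_num
@[simp] lemma epsv_3220 : eps 3 2 2 0 = 0 := by
  rw [eps_cast, show epsZ 3 2 2 0 = 0 from by decide]; norm_num
@[simp] lemma epsv_3221 : eps 3 2 2 1 = 0 := by
  rw [eps_cast, show epsZ 3 2 2 1 = 0 from by decide]; norm_num
@[simp] lemma epsv_3222 : eps 3 2 2 2 = 0 := by
  rw [eps_cast, show epsZ 3 2 2 2 = 0 from by decide]; norm_num
@[simp] lemma epsv_3223 : eps 3 2 2 3 = 0 := by
  rw [eps_cast, show epsZ 3 2 2 3 = 0 from by decide]; norm_num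
@[simp] lemma epsv_3230 : eps 3 2 3 0 = 0 := by
  rw [eps_cast, show epsZ 3 2 3 0 = 0 from by decide]; norm_num
@[simp] lemma epsv_3231 : eps 3 2 3 1 = 0 := by
  rw [eps_cast, show epsZ 3 2 3 1 = 0 from by decide]; norm_num
@[simp] lemma epsv_3232 : eps 3 2 3 2 = 0 := by
  rw [eps_cast, show epsZ 3 2 3 2 = 0 from by decide]; norm_num
@[simp] lemma epsv_3233 : eps 3 2 3 3 = 0 := by
  rw [eps_cast, show epsZ 3 2 3 3 = 0 from by decide]; norm_num
@[simp] lemma epsv_3300 : eps 3 3 0 0 = 0 := by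
  rw [eps_cast, show epsZ 3 3 0 0 = 0 from by decide]; norm_num
@[simp] lemma epsv_3301 : eps 3 3 0 1 = 0 := by
  rw [eps_cast, show epsZ 3 3 0 1 = 0 from by decide]; norm_num
@[simp] lemma epsv_3302 : eps 3 3 0 2 = 0 := by
  rw [eps_cast, show epsZ 3 3 0 2 = 0 from by decide]; norm_num
@[simp] lemma epsv_3303 : eps 3 3 0 3 = 0 := by
  rw [eps_cast, show epsZ 3 3 0 3 = 0 from by decide]; norm_num
@[simp] lemma epsv_3310 : eps 3 3 1 0 = 0 := by
  rw [eps_cast, show epsZ 3 3 1 0 = 0 from by decide]; norm_num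
@[simp] lemma epsv_3311 : eps 3 3 1 1 = 0 := by
  rw [eps_cast, show epsZ 3 3 1 1 = 0 from by decide]; norm_num
@[simp] lemma epsv_3312 : eps 3 3 1 2 = 0 := by
  rw [eps_cast, show epsZ 3 3 1 2 = 0 from by decide]; norm_num
@[simp] lemma epsv_3313 : eps 3 3 1 3 = 0 := by
  rw [eps_cast, show epsZ 3 3 1 3 = 0 from by decide]; norm_num
@[simp] lemma epsv_3320 : eps 3 3 2 0 = 0 := by
  rw [eps_cast, show epsZ 3 3 2 0 = 0 from by decide]; norm_num
@[simp] lemma epsv_3321 : eps 3 3 2 1 = 0 := by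
  rw [eps_cast, show epsZ 3 3 2 1 = 0 from by decide]; norm_num
@[simp] lemma epsv_3322 : eps 3 3 2 2 = 0 := by
  rw [eps_cast, show epsZ 3 3 2 2 = 0 from by decide]; norm_num
@[simp] lemma epsv_3323 : eps 3 3 2 3 = 0 := by
  rw [eps_cast, show epsZ 3 3 2 3 = 0 from by decide]; norm_num
@[simp] lemma epsv_3330 : eps 3 3 3 0 = 0 := by
  rw [eps_cast, show epsZ 3 3 3 0 = 0 from by decide]; norm_num
@[simp] lemma epsv_3331 : eps 3 3 3 1 = 0 := by
  rw [eps_cast, show epsZ 3 3 3 1 = 0 from by decide]; norm_num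
@[simp] lemma epsv_3332 : eps 3 3 3 2 = 0 := by
  rw [eps_cast, show epsZ 3 3 3 2 = 0 from by decide]; norm_num
@[simp] lemma epsv_3333 : eps 3 3 3 3 = 0 := by
  rw [eps_cast, show epsZ 3 3 3 3 = 0 from by decide]; norm_num
lemma hodge_explicit (F : Matrix (Fin 4) (Fin 4) ℝ) : hodge F =
    !![0, (1/2)*(F 2 3 - F 3 2), (1/2)*(-F 1 3 + F 3 1), (1/2)*(F 1 2 - F 2 1);
       (1/2)*(-F 2 3 + F 3 2), 0, (1/2)*(-F 0 3 + F 3 0), (1/2)*(F 0 2 - F 2 0);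
       (1/2)*(F 1 3 - F 3 1), (1/2)*(F 0 3 - F 3 0), 0, (1/2)*(-F 0 1 + F 1 0);
       (1/2)*(-F 1 2 + F 2 1), (1/2)*(-F 0 2 + F 2 0), (1/2)*(F 0 1 - F 1 0), 0] := by
  funext a b
  fin_cases a <;> fin_cases b <;>
    simp [hodge, Fin.sum_univ_four] <;> ring

lemma hodge_hodge (F : Matrix (Fin 4) (Fin 4) ℝ) (hF : Fᵀ = -F) :
    hodge (hodge F) = -F := by
  have ha : ∀ i j : Fin 4, F j i = -F i j := fun i j => by
    have := congrFun (congrFun hF i) j; simpa using this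
  have d0 : F 0 0 = 0 := by linarith [ha 0 0]
  have d1 : F 1 1 = 0 := by linarith [ha 1 1]
  have d2 : F 2 2 = 0 := by linarith [ha 2 2]
  have d3 : F 3 3 = 0 := by linarith [ha 3 3]
  rw [hodge_explicit F, hodge_explicit]
  funext a b
  fin_cases a <;> fin_cases b <;>
    simp [ha 0 1, ha 0 2, ha 0 3, ha 1 2, ha 1 3, ha 2 3, d0, d1, d2, d3] <;> ring

lemma hodge_transpose (F : Matrix (Fin 4) (Fin 4) ℝ) : (hodge F)ᵀ = -(hodge F) := by
  rw [hodge_explicit F]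
  funext a b
  fin_cases a <;> fin_cases b <;> simp <;> ring

lemma hodge_add (F G : Matrix (Fin 4) (Fin 4) ℝ) : hodge (F + G) = hodge F + hodge G := by
  rw [hodge_explicit F, hodge_explicit G, hodge_explicit (F + G)]
  funext a b
  fin_cases a <;> fin_cases b <;> simp [Matrix.add_apply] <;> ring

lemma hodge_smul (x : ℝ) (F : Matrix (Fin 4) (Fin 4) ℝ) : hodge (x • F) = x • hodge F := by
  rw [hodge_explicit F, hodge_explicit (x • F)]
  funext a b
  fin_cases a <;> fin_cases b <;> simp [Matrix.smul_apply] <;> ring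

lemma formInner_comm (F G : Matrix (Fin 4) (Fin 4) ℝ) : formInner F G = formInner G F := by
  simp only [formInner, Fin.sum_univ_four]
  ring

lemma formInner_smul_left (x : ℝ) (F G : Matrix (Fin 4) (Fin 4) ℝ) :
    formInner (x • F) G = x * formInner F G := by
  simp only [formInner, Fin.sum_univ_four, Matrix.smul_apply, smul_eq_mul]
  ring

lemma formInner_expand (x y u v : ℝ) (A B : Matrix (Fin 4) (Fin 4) ℝ) :
    formInner (x • A + y • B) (u • A + v • B) =
      x*u*formInner A A + (x*v + y*u)*formInner A B + y*v*formInner B B := by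
  simp only [formInner, Fin.sum_univ_four, Matrix.add_apply, Matrix.smul_apply, smul_eq_mul]
  ring

lemma formInner_hodge_symm (F G : Matrix (Fin 4) (Fin 4) ℝ) :
    formInner (hodge F) G = formInner (hodge G) F := by
  rw [hodge_explicit F, hodge_explicit G]
  simp only [formInner, Fin.sum_univ_four, Matrix.of_apply, Matrix.cons_val', Matrix.cons_val_zero, Matrix.cons_val_one, Matrix.cons_val_two, Matrix.cons_val_three, Matrix.head_cons, Matrix.tail_cons, Matrix.head_fin_const]
  norm_num
  ring

/-- A non-null 2-form F decomposes as F = a·U + b·(*U) for a t-volume U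
and real numbers a, b. -/
theorem nonnull_form_decomposition (F : Matrix (Fin 4) (Fin 4) ℝ) (hF : Fᵀ = -F)
    (h : (formInner F F) ^ 2 + (formInner (hodge F) F) ^ 2 ≠ 0) :
    ∃ (U : Matrix (Fin 4) (Fin 4) ℝ) (a b : ℝ),
      IsTVolume U ∧ F = a • U + b • hodge U := by
  set I1 := formInner F F with hI1
  set I2 := formInner (hodge F) F with hI2
  have hzne : (⟨I1, I2⟩ : ℂ) ≠ 0 := by
    intro h0
    apply h
    have h1 : I1 = 0 := congrArg Complex.re h0
    have h2 : I2 = 0 := congrArg Complex.im h0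
    rw [h1, h2]; ring
  obtain ⟨c, hc⟩ := IsAlgClosed.exists_pow_nat_eq (-(⟨I1, I2⟩ : ℂ)⁻¹) (n := 2) (by norm_num)
  have hcz : c ^ 2 * (⟨I1, I2⟩ : ℂ) = -1 := by
    rw [hc]; field_simp
  have hcne : c ≠ 0 := by
    intro h0
    rw [h0] at hcz
    norm_num at hcz
  obtain ⟨p, q⟩ := c
  have hre : (p^2 - q^2) * I1 - 2*p*q*I2 = -1 := by
    have := congrArg Complex.re hcz
    simp [pow_two, Complex.mul_re, Complex.mul_im] at this
    linear_combination this
  have him : 2*p*q*I1 + (p^2 - q^2) * I2 = 0 := by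
    have := congrArg Complex.im hcz
    simp [pow_two, Complex.mul_re, Complex.mul_im] at this
    linear_combination this
  have hpq : p^2 + q^2 ≠ 0 := by
    intro h0
    apply hcne
    have hp : p = 0 := by nlinarith [sq_nonneg p, sq_nonneg q]
    have hq : q = 0 := by nlinarith [sq_nonneg p, sq_nonneg q]
    simp [Complex.ext_iff, hp, hq]
  -- the t-volume
  set U : Matrix (Fin 4) (Fin 4) ℝ := p • F + (-q) • hodge F with hU
  have hFhF : formInner (hodge F) (hodge F) = -I1 := by
    rw [formInner_hodge_symm F (hodge F), hodge_hodge F hF,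
      show (-F) = (-1 : ℝ) • F by module, formInner_smul_left, ← hI1]
    ring
  have hFh : formInner F (hodge F) = I2 := by
    rw [formInner_comm, ← hI2]
  have hodgeU : hodge U = q • F + p • hodge F := by
    rw [hU, hodge_add, hodge_smul, hodge_smul, hodge_hodge F hF]
    module
  have hUU : formInner U U = -1 := by
    rw [hU, formInner_expand, hFh, hFhF, ← hI1]
    linear_combination hre
  have hhUU : formInner (hodge U) U = 0 := by
    rw [hodgeU, hU, formInner_expand, hFh, hFhF, ← hI1]
    linear_combination him
  have hUt : Uᵀ = -U := by
    rw [hU, Matrix.transpose_add, Matrix.transpose_smul, Matrix.transpose_smul, hF,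
      hodge_transpose]
    module
  refine ⟨U, p / (p^2+q^2), q / (p^2+q^2), ⟨hUt, hUU, hhUU⟩, ?_⟩
  rw [hodgeU, hU]
  have e1 : p / (p^2+q^2) * p + q / (p^2+q^2) * q = 1 := by
    field_simp
  have e2 : p / (p^2+q^2) * (-q) + q / (p^2+q^2) * p = 0 := by
    field_simp
    ring
  calc F = (p / (p^2+q^2) * p + q / (p^2+q^2) * q) • F
        + (p / (p^2+q^2) * (-q) + q / (p^2+q^2) * p) • hodge F := by
        rw [e1, e2]; module
    _ = _ := by module

end
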